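/- Suppose a finite dataset of n samples x_1,…,x_n with true labels y_i ∈ {0,1} drawn independently with P(y_i=1) = p(x_i), and selection s_i with s_i=1 ⇒ y_i=1 and P(s_i=1|y_i=1) = e(x_i). Then E[ (1/n)·Σ_i ( h_i·δ₁(f(x_i)) + (1-h_i)·δ₀(f(x_i)) ) ] = (1/n)·Σ_i ( p(x_i)·δ₁(f(x_i)) + (1-p(x_i))·δ₀(f(x_i)) ), where h_i = s_i + (1-s_i)·p(x_i)(1-e(x_i))/(1-p(x_i)e(x_i)), δ₁(f) = -log f, δ₀(f) = -log(1-f), and the expectation is over the joint distribution of (y_i, s_i). -/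

import Mathlib

/-- finite-sample unbiasedness of the Partial Label Causal Loss.
For each sample `x_i`, the pair `(y_i, s_i)` has joint distribution
`P(y=1,s=1) = p·e`, `P(y=1,s=0) = p(1-e)`, `P(y=0,s=0) = 1-p`, `P(y=0,s=1) = 0`
(samples independent; independence is not needed for the expectation of the sum).
The corrected label is `h_i = s_i + (1-s_i)·p(1-e)/(1-pe)`, which equals `1` when
`s_i = 1`. The expectation over the joint distribution of `(y_i, s_i)` of the averaged
corrected loss equals the averaged ideal loss with true probabilities `p(x_i)`. -/
theorem stmt14 {X : Type*} (n : ℕ) (hn : 0 < n) (x : Fin n → X)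
    (p e : X → ℝ)
    (hp : ∀ i, p (x i) ∈ Set.Icc (0:ℝ) 1) (he : ∀ i, e (x i) ∈ Set.Icc (0:ℝ) 1)
    (hpe : ∀ i, p (x i) * e (x i) < 1)
    (f : X → ℝ) (hf : ∀ i, f (x i) ∈ Set.Ioo (0:ℝ) 1)
    (w : X → Bool × Bool → ℝ)
    (hw11 : ∀ a, w a (true, true) = p a * e a)
    (hw10 : ∀ a, w a (true, false) = p a * (1 - e a))
    (hw00 : ∀ a, w a (false, false) = 1 - p a)
    (hw01 : ∀ a, w a (false, true) = 0)
    (h : X → Bool → ℝ)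
    (hh : ∀ a s, h a s = if s then 1 else p a * (1 - e a) / (1 - p a * e a)) :
    (1 / (n:ℝ)) * ∑ i, ∑ ys : Bool × Bool, w (x i) ys *
        (h (x i) ys.2 * (-Real.log (f (x i)))
          + (1 - h (x i) ys.2) * (-Real.log (1 - f (x i))))
      = (1 / (n:ℝ)) * ∑ i, (p (x i) * (-Real.log (f (x i)))
          + (1 - p (x i)) * (-Real.log (1 - f (x i)))) := by
  congr 1
  apply Finset.sum_congr rfl
  intro i _
  have hne : (1 : ℝ) - p (x i) * e (x i) ≠ 0 := by
    have := hpe i; linarith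
  rw [Fintype.sum_prod_type]
  simp only [Fintype.sum_bool, hw11, hw10, hw00, hw01, hh]
  simp only [if_true, if_false, Bool.false_eq_true]
  field_simp
  ring
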